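/- Let k_1 < k_2 < … < k_n be natural numbers. Then the Wronskian Wr[H_{k_1}, …, H_{k_n}] is a nonzero polynomial whose degree equals (Σ_{i=1}^{n} k_i) − n(n−1)/2. -/

import Mathlib

open Polynomial MeasureTheory

/-- The physicists' Hermite polynomials: `H 0 = 1`, `H (n+1) = 2X * H n - (H n)'`. -/
noncomputable def pHermite (R : Type*) [CommRing R] : ℕ → Polynomial R
  | 0 => 1
  | n + 1 => 2 * X * pHermite R n - derivative (pHermite R n)

/-- The Wronskian determinant of a finite family of polynomials. -/
noncomputable def polyWronskian {R : Type*} [CommRing R] {n : ℕ}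
    (f : Fin n → Polynomial R) : Polynomial R :=
  (Matrix.of fun i j : Fin n => (⇑(derivative (R := R)))^[(i : ℕ)] (f j)).det

lemma pHermite_spec (m : ℕ) :
    (pHermite ℝ m).coeff m = 2 ^ m ∧ (pHermite ℝ m).natDegree = m := by
  induction m with
  | zero => simp [pHermite]
  | succ m ih =>
    obtain ⟨hc, hd⟩ := ih
    have hder : (derivative (pHermite ℝ m)).natDegree < m + 1 :=
      lt_of_le_of_lt (natDegree_derivative_le _) (by omega)
    have hXp : (2 * X * pHermite ℝ m).coeff (m + 1) = 2 ^ (m + 1) := by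
      rw [mul_assoc, coeff_ofNat_mul, coeff_X_mul, hc]
      ring
    have hcoeff : (pHermite ℝ (m + 1)).coeff (m + 1) = 2 ^ (m + 1) := by
      show (2 * X * pHermite ℝ m - derivative (pHermite ℝ m)).coeff (m + 1) = _
      rw [coeff_sub, hXp, coeff_eq_zero_of_natDegree_lt hder, sub_zero]
    refine ⟨hcoeff, le_antisymm ?_ (le_natDegree_of_ne_zero (by rw [hcoeff]; positivity))⟩
    show (2 * X * pHermite ℝ m - derivative (pHermite ℝ m)).natDegree ≤ m + 1
    refine (natDegree_sub_le _ _).trans (max_le ?_ hder.le)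
    refine natDegree_mul_le.trans ?_
    have h2 : (2 * X : ℝ[X]).natDegree ≤ 1 := natDegree_mul_le.trans (by simp)
    omega

/-- coefficient of a product at the sum of degree bounds. -/
lemma coeff_prod_of_le {ι : Type*} (s : Finset ι) (f : ι → ℝ[X]) (d : ι → ℕ)
    (h : ∀ i ∈ s, (f i).natDegree ≤ d i) :
    (∏ i ∈ s, f i).coeff (∑ i ∈ s, d i) = ∏ i ∈ s, (f i).coeff (d i) := by
  induction s using Finset.cons_induction with
  | empty => simp
  | cons a s ha ih =>
    rw [Finset.prod_cons, Finset.sum_cons, Finset.prod_cons,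
      coeff_mul_add_eq_of_natDegree_le (h a (Finset.mem_cons_self a s))
        ((natDegree_prod_le _ _).trans (Finset.sum_le_sum fun i hi => h i (Finset.mem_cons_of_mem hi))),
      ih fun i hi => h i (Finset.mem_cons_of_mem hi)]

set_option maxHeartbeats 1000000 in
theorem stmt8 (n : ℕ) (k : Fin n → ℕ) (hk : StrictMono k) :
    polyWronskian (fun i => pHermite ℝ (k i)) ≠ 0 ∧
    ((polyWronskian (fun i => pHermite ℝ (k i))).natDegree : ℤ)
      = (∑ i : Fin n, (k i : ℤ)) - (n : ℤ) * ((n : ℤ) - 1) / 2 := by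
  have hki0 : ∀ m : ℕ, ∀ i : Fin n, i.val = m → m ≤ k i := by
    intro m
    induction m with
    | zero => intro i _; omega
    | succ p ih =>
      intro i hi
      have hp : p < n := by omega
      have h1 := ih ⟨p, hp⟩ rfl
      have h2 : (⟨p, hp⟩ : Fin n) < i := by simp only [Fin.lt_def, Fin.val_mk]; omega
      have := hk h2
      omega
  have hki : ∀ i : Fin n, (i : ℕ) ≤ k i := fun i => hki0 i.val i rfl
  set f : Fin n → ℝ[X] := fun i => pHermite ℝ (k i) with hf
  set D : ℕ := (∑ i : Fin n, k i) - (∑ i : Fin n, (i : ℕ)) with hD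
  -- facts about factors
  have hdeg : ∀ (j : Fin n) (i : ℕ), ((⇑(derivative (R := ℝ)))^[i] (f j)).natDegree ≤ k j - i := by
    intro j i
    have := natDegree_iterate_derivative (f j) i
    rwa [(pHermite_spec (k j)).2] at this
  have hco : ∀ (j : Fin n) (i : ℕ), i ≤ k j →
      ((⇑(derivative (R := ℝ)))^[i] (f j)).coeff (k j - i)
        = ((k j).descFactorial i : ℝ) * 2 ^ (k j) := by
    intro j i hij
    rw [coeff_iterate_derivative, Nat.sub_add_cancel hij, (pHermite_spec (k j)).1,
      nsmul_eq_mul]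
  -- the matrix and determinant
  set M : Matrix (Fin n) (Fin n) ℝ[X] :=
    Matrix.of fun i j : Fin n => (⇑(derivative (R := ℝ)))^[(i : ℕ)] (f j) with hM
  have hW : polyWronskian (fun i => pHermite ℝ (k i)) = M.det := rfl
  set B : Matrix (Fin n) (Fin n) ℝ :=
    Matrix.of fun i j : Fin n => ((k j).descFactorial (i : ℕ) : ℝ) * 2 ^ (k j) with hB
  -- coefficient of each permutation term
  have key : ∀ σ : Equiv.Perm (Fin n),
      (∏ i : Fin n, M (σ i) i).coeff D = ∏ i : Fin n, B (σ i) i := by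
    intro σ
    by_cases hσ : ∀ i : Fin n, ((σ i : ℕ)) ≤ k i
    · have hperm : ∑ i : Fin n, ((σ i : ℕ)) = ∑ i : Fin n, (i : ℕ) :=
        Equiv.sum_comp σ (fun i : Fin n => (i : ℕ))
      have hadd : ∑ i : Fin n, (k i - (σ i : ℕ)) + ∑ i : Fin n, ((σ i : ℕ))
          = ∑ i : Fin n, k i := by
        rw [← Finset.sum_add_distrib]
        exact Finset.sum_congr rfl fun i _ => Nat.sub_add_cancel (hσ i)
      have hsum : ∑ i : Fin n, (k i - (σ i : ℕ)) = D := by omega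
      simp only [hM, hB, Matrix.of_apply]
      rw [← hsum, coeff_prod_of_le _ _ _ (fun i _ => hdeg i (σ i))]
      exact Finset.prod_congr rfl fun i _ => (hco i (σ i) (hσ i))
    · push_neg at hσ
      obtain ⟨i, hi⟩ := hσ
      have h1 : M (σ i) i = 0 := by
        simp only [hM, Matrix.of_apply]
        exact iterate_derivative_eq_zero (by rw [(pHermite_spec (k i)).2]; exact hi)
      have h2 : B (σ i) i = 0 := by
        simp only [hB, Matrix.of_apply, Nat.descFactorial_eq_zero_iff_lt.mpr hi]
        simp
      rw [Finset.prod_eq_zero (f := fun j => M (σ j) j) (Finset.mem_univ i) h1,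
        Finset.prod_eq_zero (f := fun j => B (σ j) j) (Finset.mem_univ i) h2, coeff_zero]
  -- coefficient of the determinant at D
  have hcoeffD : (M.det).coeff D = B.det := by
    rw [Matrix.det_apply, Matrix.det_apply, finset_sum_coeff]
    refine Finset.sum_congr rfl fun σ _ => ?_
    rw [Units.smul_def, Units.smul_def, coeff_smul, key σ]
  -- B has nonzero determinant
  have hBdet : B.det ≠ 0 := by
    have hfac : B = (Matrix.of fun i j : Fin n =>
        ((k j).descFactorial (i : ℕ) : ℝ)) * Matrix.diagonal (fun j : Fin n => (2 : ℝ) ^ (k j)) := by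
      ext i j
      simp [hB, Matrix.mul_diagonal]
    have hC : (Matrix.of fun i j : Fin n => ((k j).descFactorial (i : ℕ) : ℝ)).det ≠ 0 := by
      rw [← Matrix.det_transpose]
      have heq : (Matrix.of fun i j : Fin n => ((k j).descFactorial (i : ℕ) : ℝ)).transpose =
          Matrix.of fun i j : Fin n => (descPochhammer ℝ (j : ℕ)).eval ((k i : ℝ)) := by
        ext i j
        simp [Matrix.transpose_apply, descPochhammer_eval_eq_descFactorial]
      rw [heq, ← Matrix.det_eval_matrixOfPolynomials_eq_det_vandermonde
        (fun i : Fin n => ((k i : ℝ))) (fun j : Fin n => descPochhammer ℝ (j : ℕ))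
        (fun i => descPochhammer_natDegree ℝ i) (fun i => monic_descPochhammer ℝ i)]
      rw [Matrix.det_vandermonde_ne_zero_iff]
      intro a b hab
      have hab' : ((k a : ℝ)) = ((k b : ℝ)) := hab
      exact hk.injective (by exact_mod_cast hab')
    rw [hfac, Matrix.det_mul, Matrix.det_diagonal]
    exact mul_ne_zero hC (Finset.prod_ne_zero_iff.mpr fun i _ => by positivity)
  -- degree upper bound
  have hub : (M.det).natDegree ≤ D := by
    rw [Matrix.det_apply]
    refine natDegree_sum_le_of_forall_le _ _ fun σ _ => ?_
    rw [Units.smul_def, zsmul_eq_mul]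
    refine natDegree_mul_le.trans ?_
    rw [natDegree_intCast, zero_add]
    by_cases hσ : ∀ i : Fin n, ((σ i : ℕ)) ≤ k i
    · have hperm : ∑ i : Fin n, ((σ i : ℕ)) = ∑ i : Fin n, (i : ℕ) :=
        Equiv.sum_comp σ (fun i : Fin n => (i : ℕ))
      have hadd : ∑ i : Fin n, (k i - (σ i : ℕ)) + ∑ i : Fin n, ((σ i : ℕ))
          = ∑ i : Fin n, k i := by
        rw [← Finset.sum_add_distrib]
        exact Finset.sum_congr rfl fun i _ => Nat.sub_add_cancel (hσ i)
      have hsum : ∑ i : Fin n, (k i - (σ i : ℕ)) = D := by omega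
      exact (natDegree_prod_le _ _).trans (by
        rw [← hsum]
        refine Finset.sum_le_sum fun i _ => ?_
        simpa only [hM, Matrix.of_apply] using hdeg i (σ i))
    · push_neg at hσ
      obtain ⟨i, hi⟩ := hσ
      have h1 : M (σ i) i = 0 := by
        simp only [hM, Matrix.of_apply]
        exact iterate_derivative_eq_zero (by rw [(pHermite_spec (k i)).2]; exact hi)
      rw [Finset.prod_eq_zero (f := fun j => M (σ j) j) (Finset.mem_univ i) h1, natDegree_zero]
      exact Nat.zero_le _
  have hne : M.det ≠ 0 := fun h => hBdet (by rw [← hcoeffD, h, coeff_zero])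
  have hdegeq : (M.det).natDegree = D :=
    le_antisymm hub (le_natDegree_of_ne_zero (by rw [hcoeffD]; exact hBdet))
  refine ⟨by rw [hW]; exact hne, ?_⟩
  rw [hW, hdegeq, hD]
  have hle : (∑ i : Fin n, (i : ℕ)) ≤ ∑ i : Fin n, k i := Finset.sum_le_sum fun i _ => hki i
  rw [Nat.cast_sub hle]
  push_cast
  have hgauss : (∑ i : Fin n, (i : ℤ)) * 2 = (n : ℤ) * ((n : ℤ) - 1) := by
    have h1 : (∑ i ∈ Finset.range n, i) * 2 = n * (n - 1) := Finset.sum_range_id_mul_two n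
    have h2 : (∑ i : Fin n, (i : ℤ)) = ((∑ i ∈ Finset.range n, i : ℕ) : ℤ) := by
      rw [← Fin.sum_univ_eq_sum_range]
      push_cast
      rfl
    rw [h2]
    cases n with
    | zero => simp
    | succ m =>
      have := congrArg (fun x : ℕ => (x : ℤ)) h1
      push_cast [Nat.succ_sub_one] at this ⊢
      linarith
  omega
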